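/- Let U, H be Hopf algebras and R : H ⊗ U → U ⊗ H a normal, multiplicative coalgebra map, with actions h ▷ u := ε_H(h^R)u^R and h ◁ u := ε_U(u^R)h^R. Then for all u ∈ U, h ∈ H: (h₍₁₎ ▷ u₍₁₎)·((h₍₂₎ ◁ u₍₂₎) ▷ S_U(u₍₃₎)) = ε_U(u)ε_H(h)1_U; in other words, the map ▷∘(◁ ⊗ S_U)∘(id_H ⊗ Δ_U) is a right convolution inverse of ▷ in the convolution algebra Hom_k(H ⊗ U, U). -/

import Mathlib

open TensorProduct

noncomputable section

variable {k : Type*} [Field k]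
variable {U : Type*} [Ring U] [HopfAlgebra k U]
variable {H : Type*} [Ring H] [HopfAlgebra k H]

/-- The tensor product comultiplication on `A ⊗ B`:
`a ⊗ b ↦ (a₍₁₎ ⊗ b₍₁₎) ⊗ (a₍₂₎ ⊗ b₍₂₎)`. -/
def comulTP (k A B : Type*) [Field k] [Ring A] [HopfAlgebra k A] [Ring B] [HopfAlgebra k B] :
    A ⊗[k] B →ₗ[k] (A ⊗[k] B) ⊗[k] (A ⊗[k] B) :=
  (TensorProduct.tensorTensorTensorComm k A A B B).toLinearMap ∘ₗ
    TensorProduct.map (Coalgebra.comul (R := k)) (Coalgebra.comul (R := k))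

/-- The tensor product counit on `A ⊗ B`: `a ⊗ b ↦ ε(a)ε(b)`. -/
def counitTP (k A B : Type*) [Field k] [Ring A] [HopfAlgebra k A] [Ring B] [HopfAlgebra k B] :
    A ⊗[k] B →ₗ[k] k :=
  (TensorProduct.lid k k).toLinearMap ∘ₗ
    TensorProduct.map (Coalgebra.counit (R := k)) (Coalgebra.counit (R := k))

/-- `R` is left normal: `R(h ⊗ 1_U) = 1_U ⊗ h`. -/
def LeftNormal (R : H ⊗[k] U →ₗ[k] U ⊗[k] H) : Prop :=
  ∀ h : H, R (h ⊗ₜ[k] (1 : U)) = (1 : U) ⊗ₜ[k] h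

/-- `R` is right normal: `R(1_H ⊗ u) = u ⊗ 1_H`. -/
def RightNormal (R : H ⊗[k] U →ₗ[k] U ⊗[k] H) : Prop :=
  ∀ u : U, R ((1 : H) ⊗ₜ[k] u) = u ⊗ₜ[k] (1 : H)

/-- `R` is left multiplicative: `u^R ⊗ (hh')^R = (u^R)^r ⊗ h^r(h')^R`,
as an equality of linear maps `(H ⊗ H) ⊗ U → U ⊗ H`. -/
def LeftMult (R : H ⊗[k] U →ₗ[k] U ⊗[k] H) : Prop :=
  R ∘ₗ TensorProduct.map (LinearMap.mul' k H) (LinearMap.id : U →ₗ[k] U) =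
    TensorProduct.map (LinearMap.id : U →ₗ[k] U) (LinearMap.mul' k H) ∘ₗ
      (TensorProduct.assoc k U H H).toLinearMap ∘ₗ
      TensorProduct.map R (LinearMap.id : H →ₗ[k] H) ∘ₗ
      (TensorProduct.assoc k H U H).symm.toLinearMap ∘ₗ
      TensorProduct.map (LinearMap.id : H →ₗ[k] H) R ∘ₗ
      (TensorProduct.assoc k H H U).toLinearMap

/-- `R` is right multiplicative: `(uu')^R ⊗ h^R = u^R(u')^r ⊗ (h^R)^r`,
as an equality of linear maps `H ⊗ (U ⊗ U) → U ⊗ H`. -/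
def RightMult (R : H ⊗[k] U →ₗ[k] U ⊗[k] H) : Prop :=
  R ∘ₗ TensorProduct.map (LinearMap.id : H →ₗ[k] H) (LinearMap.mul' k U) =
    TensorProduct.map (LinearMap.mul' k U) (LinearMap.id : H →ₗ[k] H) ∘ₗ
      (TensorProduct.assoc k U U H).symm.toLinearMap ∘ₗ
      TensorProduct.map (LinearMap.id : U →ₗ[k] U) R ∘ₗ
      (TensorProduct.assoc k U H U).toLinearMap ∘ₗ
      TensorProduct.map R (LinearMap.id : U →ₗ[k] U) ∘ₗ
      (TensorProduct.assoc k H U U).symm.toLinearMap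

/-- `R` is a coalgebra map for the tensor product coalgebra structures. -/
def IsCoalgMap (R : H ⊗[k] U →ₗ[k] U ⊗[k] H) : Prop :=
  counitTP k U H ∘ₗ R = counitTP k H U ∧
    comulTP k U H ∘ₗ R = TensorProduct.map R R ∘ₗ comulTP k H U

/-- The left action `h ⊗ u ↦ h ▷ u = ε_H(h^R)u^R`, as a linear map `H ⊗ U → U`. -/
def lact (R : H ⊗[k] U →ₗ[k] U ⊗[k] H) : H ⊗[k] U →ₗ[k] U :=
  (TensorProduct.rid k U).toLinearMap ∘ₗ
    TensorProduct.map (LinearMap.id : U →ₗ[k] U) (Coalgebra.counit (R := k)) ∘ₗ R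

/-- The right action `h ⊗ u ↦ h ◁ u = ε_U(u^R)h^R`, as a linear map `H ⊗ U → H`. -/
def ract (R : H ⊗[k] U →ₗ[k] U ⊗[k] H) : H ⊗[k] U →ₗ[k] H :=
  (TensorProduct.lid k H).toLinearMap ∘ₗ
    TensorProduct.map (Coalgebra.counit (R := k)) (LinearMap.id : H →ₗ[k] H) ∘ₗ R

section AuxLemmas
set_option synthInstance.maxHeartbeats 400000
set_option maxHeartbeats 1000000

variable {k : Type*} [Field k]
variable {U : Type*} [Ring U] [HopfAlgebra k U]
variable {H : Type*} [Ring H] [HopfAlgebra k H]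

open Coalgebra

lemma aux_sum_counit_right_smul {u : U} (ru : Coalgebra.Repr k u (U × U)) :
    ∑ i ∈ ru.index, Coalgebra.counit (R := k) (ru.right i) • ru.left i = u := by
  have := congrArg (TensorProduct.rid k U) (Coalgebra.sum_tmul_counit_eq ru)
  simp only [map_sum, TensorProduct.rid_tmul, one_smul] at this
  exact this

lemma aux_sum_counit_left_smul {h : H} (rh : Coalgebra.Repr k h (H × H)) :
    ∑ a ∈ rh.index, Coalgebra.counit (R := k) (rh.left a) • rh.right a = h := by
  have := congrArg (TensorProduct.lid k H) (Coalgebra.sum_counit_tmul_eq rh)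
  simp only [map_sum, TensorProduct.lid_tmul, one_smul] at this
  exact this

/-- The map `(U ⊗ H) ⊗ (U ⊗ H) → U ⊗ H`, `(u ⊗ h) ⊗ (u' ⊗ h') ↦ ε(h)u ⊗ ε(u')h'`. -/
def auxPhi (k U H : Type*) [Field k] [Ring U] [HopfAlgebra k U] [Ring H] [HopfAlgebra k H] :
    (U ⊗[k] H) ⊗[k] (U ⊗[k] H) →ₗ[k] U ⊗[k] H :=
  TensorProduct.map
    ((TensorProduct.rid k U).toLinearMap ∘ₗ
      TensorProduct.map (LinearMap.id : U →ₗ[k] U) (Coalgebra.counit (R := k)))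
    ((TensorProduct.lid k H).toLinearMap ∘ₗ
      TensorProduct.map (Coalgebra.counit (R := k)) (LinearMap.id : H →ₗ[k] H))

lemma auxPhi_comulTP (x : U ⊗[k] H) : auxPhi k U H (comulTP k U H x) = x := by
  induction x using TensorProduct.induction_on with
  | zero => simp
  | add a b ha hb => rw [map_add, map_add, ha, hb]
  | tmul u h =>
    rw [comulTP]
    simp only [LinearMap.comp_apply, LinearEquiv.coe_coe, TensorProduct.map_tmul]
    rw [← (Coalgebra.Repr.arbitrary k u).eq, ← (Coalgebra.Repr.arbitrary k h).eq]
    rw [TensorProduct.sum_tmul]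
    simp only [map_sum, TensorProduct.tmul_sum]
    simp only [TensorProduct.tensorTensorTensorComm_tmul, auxPhi, TensorProduct.map_tmul,
      LinearMap.comp_apply, LinearMap.id_coe, id_eq, TensorProduct.rid_tmul,
      TensorProduct.lid_tmul, LinearEquiv.coe_coe]
    calc ∑ i ∈ (Coalgebra.Repr.arbitrary k u).index, ∑ a ∈ (Coalgebra.Repr.arbitrary k h).index,
          (Coalgebra.counit ((Coalgebra.Repr.arbitrary k h).left a) •
            (Coalgebra.Repr.arbitrary k u).left i) ⊗ₜ[k]
          (Coalgebra.counit ((Coalgebra.Repr.arbitrary k u).right i) •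
            (Coalgebra.Repr.arbitrary k h).right a)
        = ∑ i ∈ (Coalgebra.Repr.arbitrary k u).index,
            (Coalgebra.counit ((Coalgebra.Repr.arbitrary k u).right i) •
              (Coalgebra.Repr.arbitrary k u).left i) ⊗ₜ[k]
            ∑ a ∈ (Coalgebra.Repr.arbitrary k h).index,
              (Coalgebra.counit ((Coalgebra.Repr.arbitrary k h).left a) •
                (Coalgebra.Repr.arbitrary k h).right a) := by
          refine Finset.sum_congr rfl fun i _ => ?_
          rw [TensorProduct.tmul_sum]
          refine Finset.sum_congr rfl fun a _ => ?_
          simp only [TensorProduct.smul_tmul_smul, TensorProduct.tmul_smul, smul_smul]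
          rw [TensorProduct.smul_tmul, TensorProduct.smul_tmul']
      _ = u ⊗ₜ[k] h := by
          simp only [aux_sum_counit_left_smul (Coalgebra.Repr.arbitrary k h)]
          rw [← TensorProduct.sum_tmul, aux_sum_counit_right_smul]



lemma aux_R_repr (R : H ⊗[k] U →ₗ[k] U ⊗[k] H) (hcm : IsCoalgMap R)
    {h : H} {u : U} (rh : Coalgebra.Repr k h (H × H)) (ru : Coalgebra.Repr k u (U × U)) :
    R (h ⊗ₜ[k] u) = ∑ a ∈ rh.index, ∑ i ∈ ru.index,
      lact R (rh.left a ⊗ₜ[k] ru.left i) ⊗ₜ[k] ract R (rh.right a ⊗ₜ[k] ru.right i) := by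
  have hc := LinearMap.congr_fun hcm.2 (h ⊗ₜ[k] u)
  simp only [LinearMap.comp_apply] at hc
  have hc2 : comulTP k U H (R (h ⊗ₜ[k] u)) = ∑ a ∈ rh.index, ∑ i ∈ ru.index,
      R (rh.left a ⊗ₜ[k] ru.left i) ⊗ₜ[k] R (rh.right a ⊗ₜ[k] ru.right i) := by
    rw [hc, comulTP]
    simp only [LinearMap.comp_apply, TensorProduct.map_tmul, LinearEquiv.coe_coe]
    rw [← rh.eq, ← ru.eq, TensorProduct.sum_tmul]
    simp only [map_sum, TensorProduct.tmul_sum, TensorProduct.tensorTensorTensorComm_tmul,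
      TensorProduct.map_tmul]
  have hc3 := congrArg (auxPhi k U H) hc2
  rw [auxPhi_comulTP] at hc3
  rw [hc3]
  simp only [map_sum, auxPhi, TensorProduct.map_tmul, lact, ract, LinearMap.comp_apply]

lemma aux_extract (x : U) (t : U ⊗[k] H) :
    (TensorProduct.rid k U) (TensorProduct.map (LinearMap.id : U →ₗ[k] U)
      (Coalgebra.counit (R := k))
      (TensorProduct.map (LinearMap.mul' k U) (LinearMap.id : H →ₗ[k] H)
        ((TensorProduct.assoc k U U H).symm (x ⊗ₜ[k] t)))) =
    x * (TensorProduct.rid k U) (TensorProduct.map (LinearMap.id : U →ₗ[k] U)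
      (Coalgebra.counit (R := k)) t) := by
  induction t using TensorProduct.induction_on with
  | zero => simp
  | tmul y g =>
      simp only [TensorProduct.assoc_symm_tmul, TensorProduct.map_tmul, LinearMap.mul'_apply,
        LinearMap.id_coe, id_eq, TensorProduct.rid_tmul, mul_smul_comm]
  | add a b ha hb =>
      simp only [TensorProduct.tmul_add, map_add, ha, hb, mul_add]

lemma aux_star (R : H ⊗[k] U →ₗ[k] U ⊗[k] H) (hrm : RightMult R) (hcm : IsCoalgMap R)
    {h : H} {u : U} (v : U) (rh : Coalgebra.Repr k h (H × H)) (ru : Coalgebra.Repr k u (U × U)) :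
    lact R (h ⊗ₜ[k] (u * v)) = ∑ a ∈ rh.index, ∑ i ∈ ru.index,
      lact R (rh.left a ⊗ₜ[k] ru.left i) *
        lact R (ract R (rh.right a ⊗ₜ[k] ru.right i) ⊗ₜ[k] v) := by
  have hR := LinearMap.congr_fun hrm (h ⊗ₜ[k] (u ⊗ₜ[k] v))
  simp only [LinearMap.comp_apply, TensorProduct.map_tmul, LinearMap.id_coe, id_eq,
    LinearMap.mul'_apply, LinearEquiv.coe_coe, TensorProduct.assoc_symm_tmul] at hR
  rw [aux_R_repr R hcm rh ru] at hR
  simp only [TensorProduct.sum_tmul, map_sum, LinearEquiv.coe_coe, TensorProduct.assoc_tmul,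
    TensorProduct.map_tmul, LinearMap.id_coe, id_eq] at hR
  have hl : lact R (h ⊗ₜ[k] (u * v)) = (TensorProduct.rid k U)
      (TensorProduct.map (LinearMap.id : U →ₗ[k] U) (Coalgebra.counit (R := k))
        (R (h ⊗ₜ[k] (u * v)))) := rfl
  rw [hl, hR]
  simp only [map_sum]
  refine Finset.sum_congr rfl fun a _ => Finset.sum_congr rfl fun i _ => ?_
  rw [aux_extract]
  rfl

/-- The main composite, with `comul h` pre-plugged, as a linear map in the `U`-variables. -/
def auxM (R : H ⊗[k] U →ₗ[k] U ⊗[k] H) (h : H) : U ⊗[k] (U ⊗[k] U) →ₗ[k] U :=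
  (LinearMap.mul' k U ∘ₗ
    TensorProduct.map (lact R)
      (lact R ∘ₗ
        TensorProduct.map (ract R) (HopfAlgebra.antipode (R := k) (A := U)) ∘ₗ
        (TensorProduct.assoc k H U U).symm.toLinearMap) ∘ₗ
    (TensorProduct.tensorTensorTensorComm k H H U (U ⊗[k] U)).toLinearMap) ∘ₗ
  (TensorProduct.mk k (H ⊗[k] H) (U ⊗[k] (U ⊗[k] U))) (Coalgebra.comul (R := k) h)

lemma auxM_tmul (R : H ⊗[k] U →ₗ[k] U ⊗[k] H) {h : H} (rh : Coalgebra.Repr k h (H × H))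
    (x y z : U) :
    auxM R h (x ⊗ₜ[k] (y ⊗ₜ[k] z)) = ∑ a ∈ rh.index,
      lact R (rh.left a ⊗ₜ[k] x) *
        lact R (ract R (rh.right a ⊗ₜ[k] y) ⊗ₜ[k]
          HopfAlgebra.antipode (R := k) (A := U) z) := by
  rw [auxM]
  simp only [LinearMap.comp_apply, TensorProduct.mk_apply]
  rw [← rh.eq, TensorProduct.sum_tmul]
  simp only [map_sum, LinearEquiv.coe_coe, TensorProduct.tensorTensorTensorComm_tmul,
    TensorProduct.map_tmul, LinearMap.comp_apply, TensorProduct.assoc_symm_tmul,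
    LinearMap.mul'_apply]

lemma aux_lact_one (R : H ⊗[k] U →ₗ[k] U ⊗[k] H) (hln : LeftNormal R) (h : H) :
    lact R (h ⊗ₜ[k] (1 : U)) = Coalgebra.counit (R := k) h • (1 : U) := by
  rw [lact]
  simp only [LinearMap.comp_apply, hln h, TensorProduct.map_tmul, LinearMap.id_coe, id_eq,
    LinearEquiv.coe_coe, TensorProduct.rid_tmul]

lemma aux_antipode_sum {u : U} (ru : Coalgebra.Repr k u (U × U)) :
    ∑ i ∈ ru.index, ru.left i * HopfAlgebra.antipode (R := k) (A := U) (ru.right i) =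
      algebraMap k U (Coalgebra.counit (R := k) u) := by
  have h2 := HopfAlgebra.mul_antipode_lTensor_comul_apply (R := k) (A := U) u
  rw [← ru.eq] at h2
  simpa only [map_sum, LinearMap.lTensor_tmul, LinearMap.mul'_apply,
    Algebra.linearMap_apply] using h2
end AuxLemmas

/-- STATEMENT 13: for a normal, multiplicative coalgebra map `R : H ⊗ U → U ⊗ H`,
`(h₍₁₎ ▷ u₍₁₎)·((h₍₂₎ ◁ u₍₂₎) ▷ S_U(u₍₃₎)) = ε_U(u)ε_H(h)1_U`, i.e. the map
`▷ ∘ (◁ ⊗ S_U) ∘ (id ⊗ Δ_U)` is a right convolution inverse of `▷`;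
stated as an equality of linear maps `H ⊗ U → U`. -/
theorem lact_right_convolution_inverse (R : H ⊗[k] U →ₗ[k] U ⊗[k] H)
    (hln : LeftNormal R) (hrn : RightNormal R)
    (hlm : LeftMult R) (hrm : RightMult R) (hcm : IsCoalgMap R) :
    LinearMap.mul' k U ∘ₗ
      TensorProduct.map (lact R)
        (lact R ∘ₗ
          TensorProduct.map (ract R) (HopfAlgebra.antipode (R := k) (A := U)) ∘ₗ
          (TensorProduct.assoc k H U U).symm.toLinearMap) ∘ₗ
      (TensorProduct.tensorTensorTensorComm k H H U (U ⊗[k] U)).toLinearMap ∘ₗ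
      TensorProduct.map (Coalgebra.comul (R := k))
        (LinearMap.lTensor U (Coalgebra.comul (R := k)) ∘ₗ Coalgebra.comul (R := k)) =
    Algebra.linearMap k U ∘ₗ counitTP k H U := by
  apply TensorProduct.ext'
  intro h u
  set rh := Coalgebra.Repr.arbitrary k h
  set ru := Coalgebra.Repr.arbitrary k u
  set r1 : (i : ru.ι) → Coalgebra.Repr k (ru.left i) (U × U) :=
    fun i => Coalgebra.Repr.arbitrary k (ru.left i) with hr1
  set r2 : (i : ru.ι) → Coalgebra.Repr k (ru.right i) (U × U) :=
    fun i => Coalgebra.Repr.arbitrary k (ru.right i) with hr2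
  have e1 : (LinearMap.mul' k U ∘ₗ
      TensorProduct.map (lact R)
        (lact R ∘ₗ
          TensorProduct.map (ract R) (HopfAlgebra.antipode (R := k) (A := U)) ∘ₗ
          (TensorProduct.assoc k H U U).symm.toLinearMap) ∘ₗ
      (TensorProduct.tensorTensorTensorComm k H H U (U ⊗[k] U)).toLinearMap ∘ₗ
      TensorProduct.map (Coalgebra.comul (R := k))
        (LinearMap.lTensor U ((Coalgebra.comul : U →ₗ[k] U ⊗[k] U)) ∘ₗ Coalgebra.comul))
        (h ⊗ₜ[k] u) =
      auxM R h ((LinearMap.lTensor U (Coalgebra.comul : U →ₗ[k] U ⊗[k] U))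
        (Coalgebra.comul (R := k) u)) := by
    rw [auxM]
    simp only [LinearMap.comp_apply, TensorProduct.map_tmul, TensorProduct.mk_apply]
  rw [e1]
  have e2 : (LinearMap.lTensor U (Coalgebra.comul : U →ₗ[k] U ⊗[k] U))
      (Coalgebra.comul (R := k) u) =
      ∑ i ∈ ru.index, ∑ j ∈ (r2 i).index,
        ru.left i ⊗ₜ[k] ((r2 i).left j ⊗ₜ[k] (r2 i).right j) := by
    rw [← ru.eq, map_sum]
    refine Finset.sum_congr rfl fun i _ => ?_
    rw [LinearMap.lTensor_tmul, ← (r2 i).eq, TensorProduct.tmul_sum]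
  have e3 : ∑ i ∈ ru.index, ∑ j ∈ (r2 i).index,
        ru.left i ⊗ₜ[k] ((r2 i).left j ⊗ₜ[k] (r2 i).right j) =
      ∑ i ∈ ru.index, ∑ j ∈ (r1 i).index,
        (r1 i).left j ⊗ₜ[k] ((r1 i).right j ⊗ₜ[k] ru.right i) :=
    (Coalgebra.sum_tmul_tmul_eq ru r1 r2).symm
  rw [e2, e3]
  simp only [map_sum]
  have e4 : ∀ i ∈ ru.index, ∑ j ∈ (r1 i).index,
      auxM R h ((r1 i).left j ⊗ₜ[k] ((r1 i).right j ⊗ₜ[k] ru.right i)) =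
      lact R (h ⊗ₜ[k] (ru.left i * HopfAlgebra.antipode (R := k) (A := U) (ru.right i))) := by
    intro i _
    rw [aux_star R hrm hcm (HopfAlgebra.antipode (R := k) (A := U) (ru.right i)) rh (r1 i)]
    rw [Finset.sum_comm]
    refine Finset.sum_congr rfl fun j _ => ?_
    rw [auxM_tmul R rh]
  rw [Finset.sum_congr rfl e4]
  have e5 : ∑ i ∈ ru.index,
      lact R (h ⊗ₜ[k] (ru.left i * HopfAlgebra.antipode (R := k) (A := U) (ru.right i))) =
      lact R (h ⊗ₜ[k] (algebraMap k U (Coalgebra.counit (R := k) u))) := by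
    rw [← map_sum, ← TensorProduct.tmul_sum, aux_antipode_sum ru]
  rw [e5, Algebra.algebraMap_eq_smul_one, TensorProduct.tmul_smul, map_smul,
    aux_lact_one R hln]
  simp only [LinearMap.comp_apply, counitTP, TensorProduct.map_tmul, LinearEquiv.coe_coe,
    TensorProduct.lid_tmul, Algebra.linearMap_apply, Algebra.algebraMap_eq_smul_one,
    smul_smul, smul_eq_mul, mul_comm]
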